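/- Let D be the trapezoidal fuzzy variable (r1,r2,r3,r4) with 0 < r1 < r2 ≤ r3 < r4 and let λ ∈ [0,1]. Then E_λ(1/D) = ∫_0^∞ m_λ(D ≤ 1/r) dr = (λ/(r2 − r1))·ln(r2/r1) + ((1 − λ)/(r4 − r3))·ln(r4/r3). -/

import Mathlib

open MeasureTheory Set

/-- Possibility measure of an event `A` built from membership function `μ`
(with the convention `sSup ∅ = 0`, which holds for `Real.sSup`). -/
noncomputable def Pos (μ : ℝ → ℝ) (A : Set ℝ) : ℝ := sSup (μ '' A)

/-- Necessity measure associated with `μ`. -/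
noncomputable def Nec (μ : ℝ → ℝ) (A : Set ℝ) : ℝ := 1 - Pos μ Aᶜ

/-- The parametric measure `m_λ(A) = λ·Pos(A) + (1−λ)·Nec(A)`. -/
noncomputable def mMeas (l : ℝ) (μ : ℝ → ℝ) (A : Set ℝ) : ℝ :=
  l * Pos μ A + (1 - l) * Nec μ A

/-- The `m_λ`-expected value of the fuzzy variable with membership function `μ`:
`E_λ(ξ) = ∫_{−∞}^0 (m_λ([r,∞)) − 1) dr + ∫_0^∞ m_λ([r,∞)) dr`. -/
noncomputable def Eexp (l : ℝ) (μ : ℝ → ℝ) : ℝ :=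
  (∫ r in Set.Iic (0:ℝ), (mMeas l μ (Set.Ici r) - 1)) +
  (∫ r in Set.Ioi (0:ℝ), mMeas l μ (Set.Ici r))

/-- Membership function of the trapezoidal fuzzy variable `(r1,r2,r3,r4)`. -/
noncomputable def trapMF (r1 r2 r3 r4 : ℝ) : ℝ → ℝ := fun x =>
  if r1 ≤ x ∧ x ≤ r2 then (x - r1) / (r2 - r1)
  else if r2 ≤ x ∧ x ≤ r3 then 1
  else if r3 ≤ x ∧ x ≤ r4 then (r4 - x) / (r4 - r3)
  else 0

/-- Membership function of the triangular fuzzy variable `(r1,r2,r4)`. -/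
noncomputable def triMF (r1 r2 r4 : ℝ) : ℝ → ℝ := fun x =>
  if r1 ≤ x ∧ x ≤ r2 then (x - r1) / (r2 - r1)
  else if r2 ≤ x ∧ x ≤ r4 then (r4 - x) / (r4 - r2)
  else 0

/-- Membership function of the trapezoidal fuzzy variable `(a−α, a, b, b+β)`. -/
noncomputable def trapMF2 (a b α β : ℝ) : ℝ → ℝ := fun x =>
  if a - α ≤ x ∧ x ≤ a then 1 - (a - x) / α
  else if a ≤ x ∧ x ≤ b then 1
  else if b ≤ x ∧ x ≤ b + β then 1 - (x - b) / β
  else 0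

/-- Membership function of the triangular fuzzy variable `(a−α, a, a+β)`. -/
noncomputable def triMF2 (a α β : ℝ) : ℝ → ℝ := fun x =>
  if a - α ≤ x ∧ x ≤ a then 1 - (a - x) / α
  else if a ≤ x ∧ x ≤ a + β then 1 - (x - a) / β
  else 0

set_option linter.unusedSectionVars false in
section
variable {r1 r2 r3 r4 : ℝ} (h12 : r1 < r2) (h23 : r2 ≤ r3) (h34 : r3 < r4)
include h12 h23 h34

lemma trap_le_one : ∀ x, trapMF r1 r2 r3 r4 x ≤ 1 := by
  intro x; unfold trapMF; split_ifs with h1 h2 h3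
  · rw [div_le_one (by linarith)]; linarith [h1.2]
  · exact le_refl 1
  · rw [div_le_one (by linarith)]; linarith [h3.1]
  · exact zero_le_one

lemma trap_r2 : trapMF r1 r2 r3 r4 r2 = 1 := by
  unfold trapMF
  rw [if_pos ⟨le_of_lt h12, le_refl r2⟩]
  exact div_self (by linarith)

lemma trap_r3 : trapMF r1 r2 r3 r4 r3 = 1 := by
  unfold trapMF; split_ifs with h1 h2 h3
  · rw [show r3 = r2 by linarith [h1.2]]; exact div_self (by linarith)
  · rfl
  · exact absurd ⟨h23, le_refl r3⟩ h2
  · exact absurd ⟨h23, le_refl r3⟩ h2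

lemma posIic_high {t : ℝ} (ht : r2 ≤ t) : Pos (trapMF r1 r2 r3 r4) (Iic t) = 1 := by
  apply csSup_eq_of_forall_le_of_forall_lt_exists_gt
  · exact ⟨_, mem_image_of_mem _ (mem_Iic.2 ht)⟩
  · rintro a ⟨x, -, rfl⟩; exact trap_le_one h12 h23 h34 x
  · intro w hw
    exact ⟨_, mem_image_of_mem _ (mem_Iic.2 ht), by rw [trap_r2 h12 h23 h34]; exact hw⟩

lemma posIic_mid {t : ℝ} (ht1 : r1 ≤ t) (ht2 : t ≤ r2) :
    Pos (trapMF r1 r2 r3 r4) (Iic t) = (t - r1) / (r2 - r1) := by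
  have hs2 : (0:ℝ) < r2 - r1 := by linarith
  have htt : trapMF r1 r2 r3 r4 t = (t - r1) / (r2 - r1) := by
    unfold trapMF; rw [if_pos ⟨ht1, ht2⟩]
  apply csSup_eq_of_forall_le_of_forall_lt_exists_gt
  · exact ⟨_, mem_image_of_mem _ (mem_Iic.2 (le_refl t))⟩
  · rintro a ⟨x, hx, rfl⟩
    rw [mem_Iic] at hx
    unfold trapMF; split_ifs with h1 h2 h3
    · rw [div_le_div_iff_of_pos_right hs2]; linarith
    · exact absurd ⟨by linarith [h2.1], by linarith [h2.1]⟩ h1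
    · exact absurd ⟨by linarith [h3.1], by linarith [h3.1]⟩ h1
    · exact div_nonneg (by linarith) (by linarith)
  · intro w hw
    exact ⟨_, mem_image_of_mem _ (mem_Iic.2 (le_refl t)), by rw [htt]; exact hw⟩

lemma posIic_low {t : ℝ} (ht : t < r1) : Pos (trapMF r1 r2 r3 r4) (Iic t) = 0 := by
  have htt : ∀ x ≤ t, trapMF r1 r2 r3 r4 x = 0 := by
    intro x hx; unfold trapMF; split_ifs with h1 h2 h3
    · exact absurd h1.1 (by linarith)
    · exact absurd h2.1 (by linarith)
    · exact absurd h3.1 (by linarith)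
    · rfl
  apply csSup_eq_of_forall_le_of_forall_lt_exists_gt
  · exact ⟨_, mem_image_of_mem _ (mem_Iic.2 (le_refl t))⟩
  · rintro a ⟨x, hx, rfl⟩; rw [htt x (mem_Iic.1 hx)]
  · intro w hw
    exact ⟨_, mem_image_of_mem _ (mem_Iic.2 (le_refl t)), by rw [htt t (le_refl t)]; exact hw⟩

lemma posIoi_low {t : ℝ} (ht : t < r3) : Pos (trapMF r1 r2 r3 r4) (Ioi t) = 1 := by
  apply csSup_eq_of_forall_le_of_forall_lt_exists_gt
  · exact ⟨_, mem_image_of_mem _ (mem_Ioi.2 ht)⟩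
  · rintro a ⟨x, -, rfl⟩; exact trap_le_one h12 h23 h34 x
  · intro w hw
    exact ⟨_, mem_image_of_mem _ (mem_Ioi.2 ht), by rw [trap_r3 h12 h23 h34]; exact hw⟩

lemma posIoi_high {t : ℝ} (ht : r4 ≤ t) : Pos (trapMF r1 r2 r3 r4) (Ioi t) = 0 := by
  have htt : ∀ x, t < x → trapMF r1 r2 r3 r4 x = 0 := by
    intro x hx; unfold trapMF; split_ifs with h1 h2 h3
    · exact absurd h1.2 (by linarith)
    · exact absurd h2.2 (by linarith)
    · exact absurd h3.2 (by linarith)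
    · rfl
  apply csSup_eq_of_forall_le_of_forall_lt_exists_gt
  · exact ⟨_, mem_image_of_mem _ (mem_Ioi.2 (lt_add_one t))⟩
  · rintro a ⟨x, hx, rfl⟩; rw [htt x (mem_Ioi.1 hx)]
  · intro w hw
    exact ⟨_, mem_image_of_mem _ (mem_Ioi.2 (lt_add_one t)),
      by rw [htt (t+1) (lt_add_one t)]; exact hw⟩

lemma posIoi_mid {t : ℝ} (ht1 : r3 ≤ t) (ht2 : t < r4) :
    Pos (trapMF r1 r2 r3 r4) (Ioi t) = (r4 - t) / (r4 - r3) := by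
  have hs4 : (0:ℝ) < r4 - r3 := by linarith
  apply csSup_eq_of_forall_le_of_forall_lt_exists_gt
  · exact ⟨_, mem_image_of_mem _ (mem_Ioi.2 (lt_add_one t))⟩
  · rintro a ⟨x, hx, rfl⟩
    rw [mem_Ioi] at hx
    unfold trapMF; split_ifs with h1 h2 h3
    · exact absurd h1.2 (by linarith)
    · exact absurd h2.2 (by linarith)
    · rw [div_le_div_iff_of_pos_right hs4]; linarith
    · exact div_nonneg (by linarith) (by linarith)
  · intro w hw
    obtain ⟨c, hc_def⟩ : ∃ y : ℝ, y = (r4 - t) / (r4 - r3) := ⟨_, rfl⟩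
    rw [← hc_def] at hw
    have hc : (r4 - r3) * c = r4 - t := by rw [hc_def]; field_simp
    have hcpos : 0 < c := hc_def ▸ div_pos (by linarith) hs4
    have hc1 : c ≤ 1 := by rw [hc_def, div_le_one hs4]; linarith
    obtain ⟨w', hw'_def⟩ : ∃ y : ℝ, y = max w 0 := ⟨_, rfl⟩
    have hw'0 : 0 ≤ w' := hw'_def ▸ le_max_right w 0
    have hw'c : w' < c := hw'_def ▸ max_lt hw hcpos
    have hww' : w ≤ w' := hw'_def ▸ le_max_left w 0
    obtain ⟨x, hx_def⟩ : ∃ y : ℝ, y = r4 - (r4 - r3) * ((w' + c) / 2) := ⟨_, rfl⟩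
    have hx1 : t < x := by rw [hx_def]; nlinarith [mul_pos hs4 (sub_pos.2 hw'c)]
    have hx2 : x ≤ r4 := by rw [hx_def]; nlinarith [mul_nonneg hs4.le (by linarith : (0:ℝ) ≤ (w' + c) / 2)]
    have hx3 : r3 < x := by rw [hx_def]; nlinarith [mul_lt_mul_of_pos_left (by linarith : (w' + c) / 2 < 1) hs4]
    have hval : trapMF r1 r2 r3 r4 x = (w' + c) / 2 := by
      unfold trapMF; split_ifs with h1 h2 h3
      · exact absurd h1.2 (by linarith)
      · exact absurd h2.2 (by linarith)
      · rw [show r4 - x = (r4 - r3) * ((w' + c) / 2) by rw [hx_def]; ring]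
        field_simp
      · exact absurd ⟨le_of_lt hx3, hx2⟩ h3
    exact ⟨_, mem_image_of_mem _ (mem_Ioi.2 hx1), by rw [hval]; linarith⟩

end


lemma seg_eq {f g : ℝ → ℝ} {a b : ℝ} (hab : a ≤ b) (h : EqOn f g (Ioc a b)) :
    ∫ x in a..b, f x = ∫ x in a..b, g x := by
  rw [intervalIntegral.integral_of_le hab, intervalIntegral.integral_of_le hab]
  exact setIntegral_congr_fun measurableSet_Ioc h

lemma seg_ii {f g : ℝ → ℝ} {a b : ℝ} (hab : a ≤ b) (h : EqOn g f (Ioc a b))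
    (hg : IntervalIntegrable g volume a b) : IntervalIntegrable f volume a b :=
  hg.congr (by
    rw [uIoc_of_le hab]
    exact h)

theorem stmt_6 (r1 r2 r3 r4 l : ℝ)
    (h0 : 0 < r1) (h12 : r1 < r2) (h23 : r2 ≤ r3) (h34 : r3 < r4)
    (hl : l ∈ Set.Icc (0:ℝ) 1) :
    (∫ r in Set.Ioi (0:ℝ), mMeas l (trapMF r1 r2 r3 r4) (Set.Iic (1 / r))) =
      l / (r2 - r1) * Real.log (r2 / r1) + (1 - l) / (r4 - r3) * Real.log (r4 / r3) := by
  have h02 : (0:ℝ) < r2 := by linarith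
  have h03 : (0:ℝ) < r3 := by linarith
  have h04 : (0:ℝ) < r4 := by linarith
  set f : ℝ → ℝ := fun r => mMeas l (trapMF r1 r2 r3 r4) (Set.Iic (1 / r)) with hf_def
  set b1 : ℝ := 1 / r4 with hb1_def
  set b2 : ℝ := 1 / r3 with hb2_def
  set b3 : ℝ := 1 / r2 with hb3_def
  set b4 : ℝ := 1 / r1 with hb4_def
  have hb1 : 0 < b1 := by positivity
  have hb2 : 0 < b2 := by positivity
  have hb3 : 0 < b3 := by positivity
  have hb4 : 0 < b4 := by positivity
  have hb12 : b1 < b2 := one_div_lt_one_div_of_lt h03 h34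
  have hb23 : b2 ≤ b3 := one_div_le_one_div_of_le h02 h23
  have hb34 : b3 < b4 := one_div_lt_one_div_of_lt h0 h12
  -- pointwise values
  have hmM : ∀ t : ℝ, mMeas l (trapMF r1 r2 r3 r4) (Iic t) =
      l * Pos (trapMF r1 r2 r3 r4) (Iic t)
        + (1 - l) * (1 - Pos (trapMF r1 r2 r3 r4) (Ioi t)) := by
    intro t; unfold mMeas Nec; rw [compl_Iic]
  have hf1 : EqOn f (fun _ => (1:ℝ)) (Ioc 0 b1) := by
    intro r hr
    have hrpos : 0 < r := hr.1
    have ht : r4 ≤ 1 / r := by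
      have := one_div_le_one_div_of_le hrpos hr.2
      rwa [hb1_def, one_div_one_div] at this
    show mMeas l (trapMF r1 r2 r3 r4) (Iic (1/r)) = 1
    rw [hmM, posIic_high h12 h23 h34 (by linarith), posIoi_high h12 h23 h34 ht]
    ring
  have hf2 : EqOn f (fun r => l + (1 - l) * (1/r - r3) / (r4 - r3)) (Ioc b1 b2) := by
    intro r hr
    have hrpos : 0 < r := lt_trans hb1 hr.1
    have ht1 : r3 ≤ 1 / r := by
      have := one_div_le_one_div_of_le hrpos hr.2
      rwa [hb2_def, one_div_one_div] at this
    have ht2 : 1 / r < r4 := by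
      have := one_div_lt_one_div_of_lt hb1 hr.1
      rwa [hb1_def, one_div_one_div] at this
    show mMeas l (trapMF r1 r2 r3 r4) (Iic (1/r)) = _
    have hrne : r ≠ 0 := ne_of_gt hrpos
    have hs4ne : r4 - r3 ≠ 0 := ne_of_gt (by linarith)
    have key : (1:ℝ) - (r4 - 1/r) / (r4 - r3) = (1/r - r3) / (r4 - r3) := by
      field_simp
      ring
    rw [hmM, posIic_high h12 h23 h34 (by linarith), posIoi_mid h12 h23 h34 ht1 ht2, key]
    ring
  have hf3 : EqOn f (fun _ => l) (Ioc b2 b3) := by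
    intro r hr
    have hrpos : 0 < r := lt_trans hb2 hr.1
    have ht1 : r2 ≤ 1 / r := by
      have := one_div_le_one_div_of_le hrpos hr.2
      rwa [hb3_def, one_div_one_div] at this
    have ht2 : 1 / r < r3 := by
      have := one_div_lt_one_div_of_lt hb2 hr.1
      rwa [hb2_def, one_div_one_div] at this
    show mMeas l (trapMF r1 r2 r3 r4) (Iic (1/r)) = l
    rw [hmM, posIic_high h12 h23 h34 ht1, posIoi_low h12 h23 h34 ht2]
    ring
  have hf4 : EqOn f (fun r => l * (1/r - r1) / (r2 - r1)) (Ioc b3 b4) := by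
    intro r hr
    have hrpos : 0 < r := lt_trans hb3 hr.1
    have ht1 : r1 ≤ 1 / r := by
      have := one_div_le_one_div_of_le hrpos hr.2
      rwa [hb4_def, one_div_one_div] at this
    have ht2 : 1 / r < r2 := by
      have := one_div_lt_one_div_of_lt hb3 hr.1
      rwa [hb3_def, one_div_one_div] at this
    show mMeas l (trapMF r1 r2 r3 r4) (Iic (1/r)) = _
    have hrne : r ≠ 0 := ne_of_gt hrpos
    have hs2ne : r2 - r1 ≠ 0 := ne_of_gt (by linarith)
    rw [hmM, posIic_mid h12 h23 h34 ht1 (le_of_lt ht2),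
      posIoi_low h12 h23 h34 (by linarith)]
    field_simp
    ring
  have hf5 : ∀ r, b4 < r → f r = 0 := by
    intro r hr
    have hrpos : 0 < r := lt_trans hb4 hr
    have ht : 1 / r < r1 := by
      have := one_div_lt_one_div_of_lt hb4 hr
      rwa [hb4_def, one_div_one_div] at this
    show mMeas l (trapMF r1 r2 r3 r4) (Iic (1/r)) = 0
    rw [hmM, posIic_low h12 h23 h34 ht, posIoi_low h12 h23 h34 (by linarith)]
    ring
  -- reduce to interval [0, b4]
  have step1 : (∫ r in Set.Ioi (0:ℝ), f r) = ∫ r in (0:ℝ)..b4, f r := by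
    rw [setIntegral_congr_fun measurableSet_Ioi
        (show EqOn f ((Ioc (0:ℝ) b4).indicator f) (Ioi 0) by
          intro r hr
          by_cases h : r ≤ b4
          · rw [indicator_of_mem (mem_Ioc.mpr ⟨mem_Ioi.mp hr, h⟩) f]
          · rw [indicator_of_notMem (fun hm => h hm.2), hf5 r (lt_of_not_ge h)]),
      setIntegral_indicator measurableSet_Ioc,
      inter_eq_self_of_subset_right Ioc_subset_Ioi_self,
      intervalIntegral.integral_of_le hb4.le]
  -- integrability of each piece
  have hii1 : IntervalIntegrable f volume 0 b1 :=
    seg_ii hb1.le hf1.symm intervalIntegrable_const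
  have hcont2 : ContinuousOn (fun r : ℝ => l + (1 - l) * (1/r - r3) / (r4 - r3)) (uIcc b1 b2) := by
    apply continuousOn_const.add
    apply ContinuousOn.div_const
    apply continuousOn_const.mul
    apply ContinuousOn.sub _ continuousOn_const
    apply ContinuousOn.div continuousOn_const continuousOn_id
    intro x hx
    rw [uIcc_of_le hb12.le] at hx
    exact ne_of_gt (lt_of_lt_of_le hb1 hx.1)
  have hii2 : IntervalIntegrable f volume b1 b2 :=
    seg_ii hb12.le hf2.symm (hcont2.intervalIntegrable)
  have hii3 : IntervalIntegrable f volume b2 b3 :=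
    seg_ii hb23 hf3.symm intervalIntegrable_const
  have hcont4 : ContinuousOn (fun r : ℝ => l * (1/r - r1) / (r2 - r1)) (uIcc b3 b4) := by
    apply ContinuousOn.div_const
    apply continuousOn_const.mul
    apply ContinuousOn.sub _ continuousOn_const
    apply ContinuousOn.div continuousOn_const continuousOn_id
    intro x hx
    rw [uIcc_of_le hb34.le] at hx
    exact ne_of_gt (lt_of_lt_of_le hb3 hx.1)
  have hii4 : IntervalIntegrable f volume b3 b4 :=
    seg_ii hb34.le hf4.symm (hcont4.intervalIntegrable)
  -- split
  have split : (∫ r in (0:ℝ)..b4, f r) =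
      (∫ r in (0:ℝ)..b1, f r) + (∫ r in b1..b2, f r) + (∫ r in b2..b3, f r)
        + (∫ r in b3..b4, f r) := by
    rw [intervalIntegral.integral_add_adjacent_intervals hii1 hii2,
      intervalIntegral.integral_add_adjacent_intervals (hii1.trans hii2) hii3,
      intervalIntegral.integral_add_adjacent_intervals ((hii1.trans hii2).trans hii3) hii4]
  -- segment values
  have S1 : (∫ r in (0:ℝ)..b1, f r) = b1 := by
    rw [seg_eq hb1.le hf1, intervalIntegral.integral_const]
    simp
  have S2 : (∫ r in b1..b2, f r) =
      (l * b2 + (1 - l) * (Real.log b2 - r3 * b2) / (r4 - r3))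
        - (l * b1 + (1 - l) * (Real.log b1 - r3 * b1) / (r4 - r3)) := by
    rw [seg_eq hb12.le hf2]
    apply intervalIntegral.integral_eq_sub_of_hasDerivAt
      (f := fun r => l * r + (1 - l) * (Real.log r - r3 * r) / (r4 - r3))
    · intro x hx
      rw [uIcc_of_le hb12.le] at hx
      have hxpos : 0 < x := lt_of_lt_of_le hb1 hx.1
      have h1 : HasDerivAt (fun r : ℝ => l * r + (1 - l) * (Real.log r - r3 * r) / (r4 - r3))
          (l * 1 + (1 - l) * (x⁻¹ - r3 * 1) / (r4 - r3)) x := by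
        exact ((hasDerivAt_id x).const_mul l).add
          ((((Real.hasDerivAt_log (ne_of_gt hxpos)).sub
            ((hasDerivAt_id x).const_mul r3)).const_mul (1 - l)).div_const (r4 - r3))
      refine h1.congr_deriv ?_
      beta_reduce
      ring
    · exact hcont2.intervalIntegrable
  have S3 : (∫ r in b2..b3, f r) = (b3 - b2) * l := by
    rw [seg_eq hb23 hf3, intervalIntegral.integral_const, smul_eq_mul]
  have S4 : (∫ r in b3..b4, f r) =
      (l * (Real.log b4 - r1 * b4) / (r2 - r1))
        - (l * (Real.log b3 - r1 * b3) / (r2 - r1)) := by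
    rw [seg_eq hb34.le hf4]
    apply intervalIntegral.integral_eq_sub_of_hasDerivAt
      (f := fun r => l * (Real.log r - r1 * r) / (r2 - r1))
    · intro x hx
      rw [uIcc_of_le hb34.le] at hx
      have hxpos : 0 < x := lt_of_lt_of_le hb3 hx.1
      have h1 : HasDerivAt (fun r : ℝ => l * (Real.log r - r1 * r) / (r2 - r1))
          (l * (x⁻¹ - r1 * 1) / (r2 - r1)) x := by
        exact (((Real.hasDerivAt_log (ne_of_gt hxpos)).sub
          ((hasDerivAt_id x).const_mul r1)).const_mul l).div_const (r2 - r1)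
      refine h1.congr_deriv ?_
      beta_reduce
      ring
    · exact hcont4.intervalIntegrable
  rw [step1, split, S1, S2, S3, S4]
  rw [hb1_def, hb2_def, hb3_def, hb4_def]
  rw [show Real.log (1/r4) = -Real.log r4 by rw [one_div, Real.log_inv],
    show Real.log (1/r3) = -Real.log r3 by rw [one_div, Real.log_inv],
    show Real.log (1/r2) = -Real.log r2 by rw [one_div, Real.log_inv],
    show Real.log (1/r1) = -Real.log r1 by rw [one_div, Real.log_inv],
    Real.log_div (ne_of_gt h02) (ne_of_gt h0),
    Real.log_div (ne_of_gt h04) (ne_of_gt h03)]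
  have h1ne : r1 ≠ 0 := ne_of_gt h0
  have h2ne : r2 ≠ 0 := ne_of_gt h02
  have h3ne : r3 ≠ 0 := ne_of_gt h03
  have h4ne : r4 ≠ 0 := ne_of_gt h04
  have hs2ne : r2 - r1 ≠ 0 := ne_of_gt (by linarith)
  have hs4ne : r4 - r3 ≠ 0 := ne_of_gt (by linarith)
  field_simp
  ring
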